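/- arXiv:2506.04380 — 3 statements merged into one kernel-verified Lean document; each statement's English description precedes it below -/
import Mathlib

section
/- (Lemma 2, virtual distillation bound.) Let ρ = Σ_k p_k |ψ_k⟩⟨ψ_k| with (ψ_k) an orthonormal basis of ℂ^d, p_k ≥ 0, Σ_k p_k = 1, and suppose p_q = max_k p_k > 0 is attained at index q. Then for every Hermitian d×d matrix O and every integer n ≥ 1, tr(ρⁿ) > 0 and | tr(ρⁿ O)/tr(ρⁿ) − ⟨ψ_q, O ψ_q⟩ | ≤ 2 ‖O‖_∞ · (Σ_{k≠q} p_kⁿ) / p_qⁿ. (When p_q < 1 the right-hand side equals 2‖O‖_∞ (p_q⁻¹ − 1)ⁿ exp(−(n−1) H_n(p')), where p'_k = p_k/(1 − p_q) for k ≠ q and H_n is the order-n Rényi entropy.) -/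
open MeasureTheory Complex
open scoped BigOperators ComplexConjugate Real NormedSpace ComplexOrder

attribute [local instance] Matrix.frobeniusSeminormedAddCommGroup
  Matrix.frobeniusNormedAddCommGroup Matrix.frobeniusNormedSpace

noncomputable section

/-- The complex inner product on `ℂ^d`, conjugate-linear in the first argument. -/
def cinner {d : ℕ} (u v : Fin d → ℂ) : ℂ := ∑ i, conj (u i) * v i

/-- The rank-one matrix `|u⟩⟨v|`, acting as `w ↦ ⟨v, w⟩ u`. -/
def ketbra {d : ℕ} (u v : Fin d → ℂ) : Matrix (Fin d) (Fin d) ℂ :=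
  Matrix.of fun i j => u i * conj (v j)

/-- The density of the centered normal distribution `N(0, σ)`. -/
def gaussPDF (σ t : ℝ) : ℝ := (Real.sqrt (2 * π) * σ)⁻¹ * Real.exp (-(t ^ 2) / (2 * σ ^ 2))

/-- The time-evolved state `ψ(t) = exp(−i t H) ψ(0)`. -/
def evolve {d : ℕ} (H : Matrix (Fin d) (Fin d) ℂ) (ψ0 : Fin d → ℂ) (t : ℝ) : Fin d → ℂ :=
  (NormedSpace.exp ((-(Complex.I * (t : ℂ))) • H)).mulVec ψ0

/-- The time-evolved pure state `ρ(t) = |ψ(t)⟩⟨ψ(t)|`. -/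
def rhoT {d : ℕ} (H : Matrix (Fin d) (Fin d) ℂ) (ψ0 : Fin d → ℂ) (t : ℝ) :
    Matrix (Fin d) (Fin d) ℂ :=
  ketbra (evolve H ψ0 t) (evolve H ψ0 t)

/-- The Gaussian time-average `ρ̄ = ∫ G(t) ρ(t) dt` (a Bochner integral of the matrix-valued
function, with respect to the Frobenius norm topology on matrices). -/
def rhoBar {d : ℕ} (H : Matrix (Fin d) (Fin d) ℂ) (ψ0 : Fin d → ℂ) (σ : ℝ) :
    Matrix (Fin d) (Fin d) ℂ :=
  ∫ t : ℝ, gaussPDF σ t • rhoT H ψ0 t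

/-- The trace norm (sum of singular values) `‖A‖₁ = tr √(Aᴴ A)`. -/
def traceNorm {d : ℕ} (A : Matrix (Fin d) (Fin d) ℂ) : ℝ :=
  (((Matrix.posSemidef_conjTranspose_mul_self A).1.eigenvectorUnitary : Matrix (Fin d) (Fin d) ℂ) *
    Matrix.diagonal (((↑) : ℝ → ℂ) ∘ (√·) ∘ (Matrix.posSemidef_conjTranspose_mul_self A).1.eigenvalues) *
    (star (Matrix.posSemidef_conjTranspose_mul_self A).1.eigenvectorUnitary : Matrix (Fin d) (Fin d) ℂ)).trace.re

/-- The operator norm `‖A‖_∞` of a matrix acting on the Euclidean space `ℂ^d`. -/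
def opNorm {d : ℕ} (A : Matrix (Fin d) (Fin d) ℂ) : ℝ :=
  ‖Matrix.toEuclideanCLM (𝕜 := ℂ) A‖


lemma ketbra_mul_ketbra {d : ℕ} (u v w x : Fin d → ℂ) :
    ketbra u v * ketbra w x = cinner v w • ketbra u x := by
  ext i j
  simp only [Matrix.mul_apply, ketbra, Matrix.of_apply, Matrix.smul_apply, smul_eq_mul, cinner,
    Finset.sum_mul]
  exact Finset.sum_congr rfl fun m _ => by ring

lemma trace_ketbra {d : ℕ} (u v : Fin d → ℂ) : (ketbra u v).trace = cinner v u := by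
  simp only [Matrix.trace, Matrix.diag, ketbra, Matrix.of_apply, cinner]
  exact Finset.sum_congr rfl fun m _ => by ring

lemma trace_ketbra_mul {d : ℕ} (u : Fin d → ℂ) (O : Matrix (Fin d) (Fin d) ℂ) :
    (ketbra u u * O).trace = cinner u (O.mulVec u) := by
  simp only [Matrix.trace, Matrix.diag, Matrix.mul_apply, ketbra, Matrix.of_apply, cinner,
    Matrix.mulVec, dotProduct, Finset.mul_sum]
  rw [Finset.sum_comm]
  exact Finset.sum_congr rfl fun m _ => Finset.sum_congr rfl fun i _ => by ring

lemma quad_bound {d : ℕ} (O : Matrix (Fin d) (Fin d) ℂ) (u : Fin d → ℂ)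
    (hu : cinner u u = 1) : ‖cinner u (O.mulVec u)‖ ≤ opNorm O := by
  set u' : EuclideanSpace ℂ (Fin d) := (WithLp.equiv 2 _).symm u with hu'
  have h1 : cinner u (O.mulVec u) = inner ℂ u' (Matrix.toEuclideanCLM (𝕜 := ℂ) O u') := by
    rw [hu']
    simp [PiLp.inner_apply, Matrix.mulVec, dotProduct, cinner, Matrix.toLin'_apply, RCLike.inner_apply]
    exact Finset.sum_congr rfl fun _ _ => mul_comm _ _
  have h2 : (inner ℂ u' u' : ℂ) = 1 := by
    rw [hu']; simp only [WithLp.equiv_symm_apply, PiLp.inner_apply, PiLp.toLp_apply, RCLike.inner_apply]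
    rw [← hu, cinner]; exact Finset.sum_congr rfl fun _ _ => by ring
  have h3 : ‖u'‖ = 1 := by
    have := inner_self_eq_norm_sq_to_K (𝕜 := ℂ) u'
    rw [h2] at this
    have h4 : ((‖u'‖ : ℂ))^2 = 1 := this.symm
    have : ‖u'‖ ^ 2 = 1 := by exact_mod_cast h4
    nlinarith [norm_nonneg u']
  calc ‖cinner u (O.mulVec u)‖
      = ‖(inner ℂ u' (Matrix.toEuclideanCLM (𝕜 := ℂ) O u') : ℂ)‖ := by rw [h1]
    _ ≤ ‖u'‖ * ‖Matrix.toEuclideanCLM (𝕜 := ℂ) O u'‖ := norm_inner_le_norm _ _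
    _ ≤ ‖u'‖ * (‖Matrix.toEuclideanCLM (𝕜 := ℂ) O‖ * ‖u'‖) := by
        gcongr; exact (Matrix.toEuclideanCLM (𝕜 := ℂ) O).le_opNorm u'
    _ = opNorm O := by rw [h3]; ring_nf; rfl

lemma rho_pow {d : ℕ} (ψ : Fin d → Fin d → ℂ)
    (horth : ∀ j k, cinner (ψ j) (ψ k) = if j = k then 1 else 0)
    (p : Fin d → ℝ) (n : ℕ) (hn : 1 ≤ n) :
    (∑ k, (p k : ℂ) • ketbra (ψ k) (ψ k)) ^ n
      = ∑ k, ((p k : ℂ) ^ n) • ketbra (ψ k) (ψ k) := by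
  have key : ∀ (a b : Fin d → ℂ),
      (∑ k, a k • ketbra (ψ k) (ψ k)) * (∑ l, b l • ketbra (ψ l) (ψ l))
        = ∑ k, (a k * b k) • ketbra (ψ k) (ψ k) := by
    intro a b
    rw [Finset.sum_mul_sum]
    refine Finset.sum_congr rfl fun k _ => ?_
    simp only [Matrix.smul_mul, Matrix.mul_smul, ketbra_mul_ketbra, horth, smul_smul,
      ite_smul, one_smul, zero_smul, smul_ite, smul_zero, mul_ite, mul_one, mul_zero]
    simp [Finset.sum_ite_eq, mul_comm]
  induction n with
  | zero => omega
  | succ m ih =>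
    rcases Nat.eq_zero_or_pos m with hm | hm
    · subst hm; simp
    · rw [pow_succ, ih hm, key]
      simp [pow_succ]

/-- Lemma 2, virtual distillation bound: for `ρ = Σ_k p_k |ψ_k⟩⟨ψ_k|` with
dominant eigenvalue `p_q = max_k p_k > 0`, every Hermitian `O` and every `n ≥ 1`,
`tr(ρⁿ) > 0` and `|tr(ρⁿO)/tr(ρⁿ) − ⟨ψ_q, O ψ_q⟩| ≤ 2‖O‖_∞ (Σ_{k≠q} p_kⁿ)/p_qⁿ`. -/
theorem virtual_distillation_bound
    {d : ℕ} (ψ : Fin d → Fin d → ℂ)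
    (horth : ∀ j k, cinner (ψ j) (ψ k) = if j = k then 1 else 0)
    (p : Fin d → ℝ) (hp0 : ∀ k, 0 ≤ p k) (hp1 : ∑ k, p k = 1)
    (q : Fin d) (hq : ∀ k, p k ≤ p q) (hpq : 0 < p q)
    (ρ : Matrix (Fin d) (Fin d) ℂ) (hρ : ρ = ∑ k, (p k : ℂ) • ketbra (ψ k) (ψ k))
    (O : Matrix (Fin d) (Fin d) ℂ) (hO : O.IsHermitian)
    (n : ℕ) (hn : 1 ≤ n) :
    0 < ((ρ ^ n).trace).re ∧
    ‖(ρ ^ n * O).trace / (ρ ^ n).trace - cinner (ψ q) (O.mulVec (ψ q))‖ ≤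
      2 * opNorm O * ((∑ k ∈ Finset.univ.erase q, p k ^ n) / p q ^ n) := by
  have hone : ∀ k, cinner (ψ k) (ψ k) = 1 := fun k => by simpa using horth k k
  have hpow : ρ ^ n = ∑ k, ((p k : ℂ) ^ n) • ketbra (ψ k) (ψ k) := by
    rw [hρ]; exact rho_pow ψ horth p n hn
  set c : Fin d → ℂ := fun k => cinner (ψ k) (O.mulVec (ψ k)) with hc
  set t : ℝ := ∑ k, p k ^ n with ht
  have htr : (ρ ^ n).trace = (t : ℂ) := by
    rw [hpow, Matrix.trace_sum, ht]
    push_cast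
    refine Finset.sum_congr rfl fun k _ => ?_
    rw [Matrix.trace_smul, trace_ketbra, hone, smul_eq_mul, mul_one]
  have htpq : p q ^ n ≤ t :=
    Finset.single_le_sum (fun k _ => pow_nonneg (hp0 k) n) (Finset.mem_univ q)
  have htpos : 0 < t := lt_of_lt_of_le (pow_pos hpq n) htpq
  have hne : (t : ℂ) ≠ 0 := by exact_mod_cast htpos.ne'
  refine ⟨by rw [htr]; simpa using htpos, ?_⟩
  have htrO : (ρ ^ n * O).trace = ∑ k, ((p k : ℂ) ^ n) * c k := by
    rw [hpow, Finset.sum_mul, Matrix.trace_sum]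
    refine Finset.sum_congr rfl fun k _ => ?_
    rw [Matrix.smul_mul, Matrix.trace_smul, trace_ketbra_mul, smul_eq_mul]
  have hdiff : (ρ ^ n * O).trace / (ρ ^ n).trace - cinner (ψ q) (O.mulVec (ψ q))
      = (∑ k ∈ Finset.univ.erase q, ((p k : ℂ) ^ n) * (c k - c q)) / (t : ℂ) := by
    rw [htrO, htr]
    have e1 : ∑ k ∈ Finset.univ.erase q, ((p k : ℂ) ^ n) * (c k - c q)
        = (∑ k, ((p k : ℂ) ^ n) * (c k - c q)) := by
      rw [Finset.sum_erase_eq_sub (Finset.mem_univ q)]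
      simp
    rw [e1]
    have e2 : (t : ℂ) = ∑ k, ((p k : ℂ)) ^ n := by rw [ht]; push_cast; rfl
    field_simp
    rw [e2, Finset.sum_mul, ← Finset.sum_sub_distrib]
    exact Finset.sum_congr rfl fun k _ => by ring
  rw [hdiff, norm_div]
  have habs_t : ‖(t : ℂ)‖ = t := by
    rw [Complex.norm_real, Real.norm_eq_abs, abs_of_pos htpos]
  rw [habs_t]
  have hM : 0 ≤ opNorm O := norm_nonneg _
  have hck : ∀ k, ‖c k‖ ≤ opNorm O := fun k => quad_bound O (ψ k) (hone k)
  have hnum : ‖∑ k ∈ Finset.univ.erase q, ((p k : ℂ) ^ n) * (c k - c q)‖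
      ≤ (∑ k ∈ Finset.univ.erase q, p k ^ n) * (2 * opNorm O) := by
    refine le_trans (norm_sum_le _ _) ?_
    rw [Finset.sum_mul]
    refine Finset.sum_le_sum fun k _ => ?_
    rw [norm_mul]
    have h1 : ‖(p k : ℂ) ^ n‖ = p k ^ n := by
      rw [norm_pow, Complex.norm_real, Real.norm_eq_abs, _root_.abs_of_nonneg (hp0 k)]
    rw [h1]
    refine mul_le_mul_of_nonneg_left ?_ (pow_nonneg (hp0 k) n)
    calc ‖c k - c q‖ ≤ ‖c k‖ + ‖c q‖ := by
          simpa using norm_sub_le (c k) (c q)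
      _ ≤ 2 * opNorm O := by linarith [hck k, hck q]
  have hS : 0 ≤ ∑ k ∈ Finset.univ.erase q, p k ^ n :=
    Finset.sum_nonneg fun k _ => pow_nonneg (hp0 k) n
  calc ‖∑ k ∈ Finset.univ.erase q, ((p k : ℂ) ^ n) * (c k - c q)‖ / t
      ≤ ((∑ k ∈ Finset.univ.erase q, p k ^ n) * (2 * opNorm O)) / t := by
        gcongr
    _ ≤ ((∑ k ∈ Finset.univ.erase q, p k ^ n) * (2 * opNorm O)) / p q ^ n := by
        apply div_le_div_of_nonneg_left (by positivity) (pow_pos hpq n) htpq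
    _ = 2 * opNorm O * ((∑ k ∈ Finset.univ.erase q, p k ^ n) / p q ^ n) := by ring


end
end

section
/- (Copy-number bound.) Let Q > 0, 0 < p_q < 1, let n ≥ 2 be an integer, and let p' be a probability vector on a finite nonempty index set with Rényi entropies H_n(p') = (1/(1−n)) ln Σ_k (p'_k)ⁿ and H_∞(p') = −ln max_k p'_k. Suppose Q/2 ≤ 2 (p_q⁻¹ − 1)ⁿ exp(−(n−1) H_n(p')) and that L := ln( (p_q⁻¹ − 1)⁻¹ ) + H_∞(p') > 0. Then n ≤ ( ln(4/Q) + H_∞(p') ) / L. -/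
open scoped BigOperators

noncomputable section

/-- copy-number bound: if `Q/2 ≤ 2 (p_q⁻¹ − 1)ⁿ exp(−(n−1) H_n(p'))` and
`L = ln((p_q⁻¹ − 1)⁻¹) + H_∞(p') > 0`, then `n ≤ (ln(4/Q) + H_∞(p')) / L`, where
`H_n(p') = (1/(1−n)) ln Σ_k (p'_k)ⁿ` and `H_∞(p') = −ln max_k p'_k` for the probability
vector `p'` on a finite nonempty index set. -/
theorem copy_number_bound
    {ι : Type*} [Fintype ι] [Nonempty ι]
    (p' : ι → ℝ) (hp0 : ∀ k, 0 ≤ p' k) (hp1 : ∑ k, p' k = 1)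
    (Q pq : ℝ) (hQ : 0 < Q) (hpq0 : 0 < pq) (hpq1 : pq < 1)
    (n : ℕ) (hn : 2 ≤ n)
    (Hn Hinf L : ℝ)
    (hHn : Hn = (1 / (1 - (n : ℝ))) * Real.log (∑ k, p' k ^ n))
    (hHinf : Hinf = - Real.log (Finset.univ.sup' Finset.univ_nonempty p'))
    (hQn : Q / 2 ≤ 2 * (pq⁻¹ - 1) ^ n * Real.exp (-((n : ℝ) - 1) * Hn))
    (hL : L = Real.log ((pq⁻¹ - 1)⁻¹) + Hinf) (hLpos : 0 < L) :
    (n : ℝ) ≤ (Real.log (4 / Q) + Hinf) / L := by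
  set M : ℝ := Finset.univ.sup' Finset.univ_nonempty p' with hM
  -- some entry is positive
  obtain ⟨k0, hk0⟩ : ∃ k, 0 < p' k := by
    by_contra h
    push_neg at h
    have : ∑ k, p' k = 0 := Finset.sum_eq_zero fun k _ => le_antisymm (h k) (hp0 k)
    simp [this] at hp1
  have hM0 : 0 < M := lt_of_lt_of_le hk0 (Finset.le_sup' p' (Finset.mem_univ k0))
  have hMle : ∀ k, p' k ≤ M := fun k => Finset.le_sup' p' (Finset.mem_univ k)
  set S : ℝ := ∑ k, p' k ^ n with hS
  have hS0 : 0 < S := by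
    refine Finset.sum_pos' (fun k _ => pow_nonneg (hp0 k) n) ⟨k0, Finset.mem_univ k0, ?_⟩
    exact pow_pos hk0 n
  have hn1 : (1 : ℝ) - (n : ℝ) ≠ 0 := by
    have : (2 : ℝ) ≤ (n : ℝ) := by exact_mod_cast hn
    linarith
  have hexp : Real.exp (-((n : ℝ) - 1) * Hn) = S := by
    rw [hHn]
    have : -((n : ℝ) - 1) * ((1 / (1 - (n : ℝ))) * Real.log S) = Real.log S := by
      field_simp
      ring
    rw [this, Real.exp_log hS0]
  -- S ≤ M^(n-1)
  have hSM : S ≤ M ^ (n - 1) := by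
    calc S = ∑ k, p' k ^ (n - 1) * p' k := by
          refine Finset.sum_congr rfl fun k _ => ?_
          rw [← pow_succ, Nat.sub_add_cancel (by omega)]
      _ ≤ ∑ k, M ^ (n - 1) * p' k := by
          refine Finset.sum_le_sum fun k _ => ?_
          exact mul_le_mul_of_nonneg_right (pow_le_pow_left₀ (hp0 k) (hMle k) _) (hp0 k)
      _ = M ^ (n - 1) := by rw [← Finset.mul_sum, hp1, mul_one]
  set c : ℝ := pq⁻¹ - 1 with hc
  have hc0 : 0 < c := by
    have : 1 < pq⁻¹ := (one_lt_inv₀ hpq0).mpr hpq1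
    simp [hc]; linarith
  have key : Q / 4 ≤ c ^ n * M ^ (n - 1) := by
    have h1 : Q / 2 ≤ 2 * (c ^ n * S) := by rw [← mul_assoc, ← hexp]; exact hQn
    have h2 : c ^ n * S ≤ c ^ n * M ^ (n - 1) :=
      mul_le_mul_of_nonneg_left hSM (pow_nonneg hc0.le n)
    linarith
  have hQ4 : 0 < Q / 4 := by linarith
  have hlog : Real.log (Q / 4) ≤ (n : ℝ) * Real.log c + ((n : ℝ) - 1) * Real.log M := by
    have := Real.log_le_log hQ4 key
    rw [Real.log_mul (by positivity) (by positivity), Real.log_pow, Real.log_pow] at this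
    have hcast : ((n - 1 : ℕ) : ℝ) = (n : ℝ) - 1 := by
      have : 1 ≤ n := by omega
      push_cast [this]; ring
    rw [hcast] at this
    exact this
  have hLval : L = -Real.log c - Real.log M := by
    rw [hL, hHinf, Real.log_inv]; ring
  have hQ4log : Real.log (4 / Q) = -Real.log (Q / 4) := by
    rw [← Real.log_inv]; congr 1; field_simp
  have hnL : (n : ℝ) * L ≤ Real.log (4 / Q) + Hinf := by
    rw [hQ4log, hHinf, hLval]
    nlinarith [hlog]
  calc (n : ℝ) = (n : ℝ) * L / L := by field_simp
    _ ≤ (Real.log (4 / Q) + Hinf) / L := by gcongr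

end
end

section
/- (Median-of-means concentration, Theorem 2 probabilistic part.) Let K ≥ 1 and N ≥ 1 be integers and let (X_{k,i})_{1 ≤ k ≤ K, 1 ≤ i ≤ N} be independent, identically distributed real-valued square-integrable random variables with mean μ and variance v. For each k let M_k = (1/N) Σ_{i=1}^{N} X_{k,i} be the k-th batch mean. Then the probability that at least K/2 of the indices k satisfy |M_k − μ| > 2 √(v/N) is at most exp(−K/8). In particular, any median of the batch means M_1, …, M_K deviates from μ by more than 2 √(v/N) with probability at most exp(−K/8). -/
open MeasureTheory ProbabilityTheory

lemma my_iIndep_mono {Ω ι : Type*} {_mΩ : MeasurableSpace Ω} {μ : Measure Ω}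
    {m m' : ι → MeasurableSpace Ω} (h : iIndep m μ) (hle : ∀ i, m' i ≤ m i) :
    iIndep m' μ := by
  rw [iIndep_iff] at h ⊢
  exact fun s f hf => h s fun i hi => hle i _ (hf i hi)

lemma my_log_ineq : Real.log (3/2) - Real.log 3 / 2 ≤ -(1/8) := by
  have h1 : Real.exp 1 ≤ 256 / 81 :=
    le_of_lt (lt_of_lt_of_le Real.exp_one_lt_d9 (by norm_num))
  have h2 : (1 : ℝ) ≤ Real.log (256 / 81) := by
    calc (1 : ℝ) = Real.log (Real.exp 1) := (Real.log_exp 1).symm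
    _ ≤ Real.log (256 / 81) := Real.log_le_log (Real.exp_pos 1) h1
  have h3 : Real.log (256 / 81) = 8 * Real.log 2 - 4 * Real.log 3 := by
    rw [Real.log_div (by norm_num) (by norm_num),
      show (256 : ℝ) = 2 ^ 8 by norm_num, show (81 : ℝ) = 3 ^ 4 by norm_num,
      Real.log_pow, Real.log_pow]
    push_cast; ring
  have h4 : Real.log (3/2) = Real.log 3 - Real.log 2 :=
    Real.log_div (by norm_num) (by norm_num)
  rw [h3] at h2
  linarith

lemma my_block_iIndepFun {Ω : Type*} {mΩ : MeasurableSpace Ω} {μ : Measure Ω}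
    [IsProbabilityMeasure μ]
    {K N : ℕ} (X : Fin K × Fin N → Ω → ℝ) (hmeas : ∀ p, Measurable (X p))
    (hindep : iIndepFun X μ)
    (F : Fin K → Ω → ℝ)
    (hF : ∀ k (mk : MeasurableSpace Ω),
      (∀ i, @Measurable Ω ℝ mk _ (X (k, i))) → @Measurable Ω ℝ mk _ (F k)) :
    iIndepFun F μ := by
  classical
  set π : Fin K → Set (Set Ω) := fun k =>
    {s | ∃ B : Fin N → Set ℝ, (∀ i, MeasurableSet (B i)) ∧ s = ⋂ i, X (k, i) ⁻¹' B i} with hπ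
  have hπ_pi : ∀ k, IsPiSystem (π k) := by
    rintro k s ⟨B, hB, rfl⟩ t ⟨C, hC, rfl⟩ -
    refine ⟨fun i => B i ∩ C i, fun i => (hB i).inter (hC i), ?_⟩
    ext ω
    simp only [Set.mem_inter_iff, Set.mem_iInter, Set.mem_preimage]
    constructor
    · rintro ⟨h1, h2⟩ i; exact ⟨h1 i, h2 i⟩
    · intro h; exact ⟨fun i => (h i).1, fun i => (h i).2⟩
  have hπ_meas : ∀ k, ∀ s ∈ π k, MeasurableSet s := by
    rintro k s ⟨B, hB, rfl⟩
    exact MeasurableSet.iInter fun i => hmeas _ (hB i)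
  have hπ_indepSets : iIndepSets π μ := by
    rw [iIndepSets_iff]
    intro S f hf
    choose! B hB1 hB2 using hf
    have hbig : (⋂ k ∈ S, f k) = ⋂ p ∈ S ×ˢ (Finset.univ : Finset (Fin N)),
        X p ⁻¹' B p.1 p.2 := by
      ext ω
      simp only [Set.mem_iInter, Finset.mem_product, Finset.mem_univ, and_true]
      constructor
      · rintro h ⟨k, i⟩ hk
        have h2 := h k hk
        rw [hB2 k hk] at h2
        simp only [Set.mem_iInter, Set.mem_preimage] at h2
        exact h2 i
      · intro h k hk
        rw [hB2 k hk]
        simp only [Set.mem_iInter, Set.mem_preimage]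
        exact fun i => h (k, i) hk
    have hrow : ∀ k ∈ S, f k = ⋂ p ∈ ({k} ×ˢ (Finset.univ : Finset (Fin N)) :
        Finset (Fin K × Fin N)), X p ⁻¹' B p.1 p.2 := by
      intro k hk
      rw [hB2 k hk]
      ext ω
      simp only [Set.mem_iInter, Finset.mem_product, Finset.mem_singleton, Finset.mem_univ,
        and_true, Set.mem_preimage]
      constructor
      · rintro h ⟨k', i⟩ hk'
        subst hk'
        exact h i
      · intro h i
        exact h (k, i) rfl
    rw [hbig, hindep.meas_biInter (fun p hp =>
      ⟨B p.1 p.2, hB1 p.1 (Finset.mem_product.mp hp).1 p.2, rfl⟩)]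
    rw [Finset.prod_product]
    refine Finset.prod_congr rfl fun k hk => ?_
    rw [hrow k hk, hindep.meas_biInter (fun p hp => by
      have hp1 : p.1 = k := Finset.mem_singleton.mp (Finset.mem_product.mp hp).1
      exact ⟨B p.1 p.2, hB1 p.1 (hp1 ▸ hk) p.2, rfl⟩)]
    simp [Finset.prod_product]
  have hgen : iIndep (fun k => MeasurableSpace.generateFrom (π k)) μ :=
    iIndepSets.iIndep (m := fun k => MeasurableSpace.generateFrom (π k))
      (fun k => MeasurableSpace.generateFrom_le (hπ_meas k)) π hπ_pi
      (fun k => rfl) hπ_indepSets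
  rw [iIndepFun_iff_iIndep]
  refine my_iIndep_mono hgen fun k => ?_
  refine MeasurableSpace.comap_le_iff_le_map.mpr ?_
  have hXk : ∀ i, @Measurable Ω ℝ (MeasurableSpace.generateFrom (π k)) _ (X (k, i)) := by
    intro i B hB
    refine MeasurableSpace.measurableSet_generateFrom ?_
    refine ⟨fun j => if j = i then B else Set.univ, fun j => ?_, ?_⟩
    · by_cases hj : j = i <;> simp [hj, hB]
    · ext ω
      simp only [Set.mem_iInter, Set.mem_preimage]
      constructor
      · intro h j
        by_cases hj : j = i
        · subst hj; simp [h]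
        · simp [hj]
      · intro h
        have := h i
        simpa using this
  exact MeasurableSpace.comap_le_iff_le_map.mp ((hF k _ hXk).comap_le)

/-- median-of-means concentration: for i.i.d. square-integrable real random
variables `X_{k,i}` (`1 ≤ k ≤ K`, `1 ≤ i ≤ N`) with mean `μ` and variance `v`, and batch means
`M_k = (1/N) Σ_i X_{k,i}`, the probability that at least `K/2` of the batch means deviate from
`μ` by more than `2 √(v/N)` is at most `exp(−K/8)`; in particular any median of the batch means
deviates from `μ` by more than `2 √(v/N)` with probability at most `exp(−K/8)`. -/
theorem median_of_means_concentration
    {Ω : Type*} [MeasureSpace Ω] [IsProbabilityMeasure (ℙ : Measure Ω)]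
    (K N : ℕ) (hK : 1 ≤ K) (hN : 1 ≤ N)
    (X : Fin K × Fin N → Ω → ℝ)
    (hmeas : ∀ p, Measurable (X p))
    (hL2 : ∀ p, MemLp (X p) 2 ℙ)
    (hindep : iIndepFun X ℙ)
    (hident : ∀ p q, IdentDistrib (X p) (X q) ℙ ℙ)
    (μ v : ℝ)
    (hmean : ∀ p, μ = ∫ ω, X p ω)
    (hvar : ∀ p, v = variance (X p) ℙ)
    (M : Fin K → Ω → ℝ) (hM : ∀ k ω, M k ω = (N : ℝ)⁻¹ * ∑ i, X (k, i) ω) :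
    ℙ {ω | (K : ℝ) / 2 ≤
        (Finset.univ.filter fun k => 2 * Real.sqrt (v / N) < |M k ω - μ|).card} ≤
      ENNReal.ofReal (Real.exp (-(K : ℝ) / 8)) ∧
    ∀ med : Ω → ℝ,
      (∀ ω, (K : ℝ) / 2 ≤ (Finset.univ.filter fun k => M k ω ≤ med ω).card ∧
            (K : ℝ) / 2 ≤ (Finset.univ.filter fun k => med ω ≤ M k ω).card) →
      ℙ {ω | 2 * Real.sqrt (v / N) < |med ω - μ|} ≤
        ENNReal.ofReal (Real.exp (-(K : ℝ) / 8)) := by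

  classical
  have hN0 : (0:ℝ) < N := by exact_mod_cast Nat.lt_of_lt_of_le Nat.zero_lt_one hN
  have hK0 : (0:ℝ) ≤ K := Nat.cast_nonneg K
  have hv0 : 0 ≤ v := (hvar (⟨0, hK⟩, ⟨0, hN⟩)).symm ▸ variance_nonneg _ _
  set c : ℝ := 2 * Real.sqrt (v / N) with hc
  -- measurability and moments of batch means
  have hM_meas : ∀ k, Measurable (M k) := by
    intro k
    have h1 : M k = fun ω => (N:ℝ)⁻¹ * ∑ i, X (k, i) ω := funext fun ω => hM k ω
    rw [h1]
    exact (Finset.measurable_sum Finset.univ fun i _ => hmeas (k, i)).const_mul _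
  have hXint : ∀ p, Integrable (X p) ℙ := fun p => (hL2 p).integrable one_le_two
  have hM_fun : ∀ k, M k = fun ω => (N:ℝ)⁻¹ * (∑ i, X (k, i)) ω := by
    intro k
    funext ω
    rw [hM]
    simp [Finset.sum_apply]
  have hL2_M : ∀ k, MemLp (M k) 2 ℙ := by
    intro k
    rw [hM_fun k]
    exact (memLp_finset_sum' _ fun i _ => hL2 (k, i)).const_mul _
  have hmean_M : ∀ k, ∫ ω, M k ω = μ := by
    intro k
    have h1 : ∫ ω, M k ω = (N:ℝ)⁻¹ * ∑ i, ∫ ω, X (k, i) ω := by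
      simp_rw [hM]
      rw [integral_const_mul, integral_finset_sum _ fun i _ => hXint (k, i)]
    rw [h1]
    have h2 : ∀ i : Fin N, ∫ ω, X (k, i) ω = μ := fun i => (hmean (k, i)).symm
    simp_rw [h2]
    rw [Finset.sum_const, Finset.card_univ, Fintype.card_fin, nsmul_eq_mul]
    field_simp
  have hvar_M : ∀ k, variance (M k) ℙ = v / N := by
    intro k
    rw [hM_fun k, variance_const_mul]
    have hsum : variance (∑ i, X (k, i)) ℙ = ∑ i : Fin N, variance (X (k, i)) ℙ := by
      refine IndepFun.variance_sum (fun i _ => hL2 (k, i)) ?_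
      intro i _ j _ hij
      exact hindep.indepFun (fun h => hij (congrArg Prod.snd h))
    rw [hsum]
    simp_rw [← hvar]
    rw [Finset.sum_const, Finset.card_univ, Fintype.card_fin, nsmul_eq_mul]
    field_simp
  -- the bad events and Chebyshev
  set A : Fin K → Set Ω := fun k => {ω | c < |M k ω - μ|} with hA
  have hA_meas : ∀ k, MeasurableSet (A k) := fun k =>
    measurableSet_lt measurable_const ((hM_meas k).sub measurable_const).abs
  have hA_le : ∀ k, ℙ (A k) ≤ ENNReal.ofReal (1/4) := by
    intro k
    rcases eq_or_lt_of_le hv0 with hv | hv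
    · -- degenerate case v = 0
      have hvn : v / N = 0 := by rw [← hv]; simp
      have hc0 : c = 0 := by rw [hc, hvn, Real.sqrt_zero, mul_zero]
      have hsub : A k ⊆ ⋃ n : ℕ, {ω | (1:ℝ)/(n+1) ≤ |M k ω - μ|} := by
        intro ω hω
        have h0 : 0 < |M k ω - μ| := hc0 ▸ hω
        obtain ⟨n, hn⟩ := exists_nat_one_div_lt h0
        exact Set.mem_iUnion.mpr ⟨n, le_of_lt hn⟩
      refine le_trans (measure_mono hsub) ?_
      have hz : ℙ (⋃ n : ℕ, {ω | (1:ℝ)/((n:ℝ)+1) ≤ |M k ω - μ|}) = 0 := by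
        refine measure_iUnion_null fun n => ?_
        refine le_antisymm ?_ zero_le
        have hcheb := meas_ge_le_variance_div_sq (μ := ℙ) (hL2_M k)
          (c := (1:ℝ)/((n:ℝ)+1)) (by positivity)
        rw [hvar_M k, hvn, hmean_M k] at hcheb
        simpa using hcheb
      rw [hz]
      exact zero_le
    · -- nondegenerate case v > 0
      have hcpos : 0 < c := by
        rw [hc]
        have : 0 < Real.sqrt (v / N) := Real.sqrt_pos.mpr (div_pos hv hN0)
        linarith
      have hcheb := meas_ge_le_variance_div_sq (μ := ℙ) (hL2_M k) hcpos
      rw [hvar_M k, hmean_M k] at hcheb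
      have hc2 : (v / N) / c ^ 2 = 1/4 := by
        rw [hc, mul_pow, Real.sq_sqrt (by positivity)]
        have hvN : v / N ≠ 0 := ne_of_gt (div_pos hv hN0)
        field_simp
        ring
      rw [hc2] at hcheb
      have hsub2 : A k ⊆ {ω | c ≤ |M k ω - μ|} := by
        intro ω hω
        have h1 : c < |M k ω - μ| := hω
        exact le_of_lt h1
      exact le_trans (measure_mono hsub2) hcheb
  set p : Fin K → ℝ := fun k => (ℙ (A k)).toReal with hp_def
  have hp_le : ∀ k, p k ≤ 1/4 := by
    intro k
    have := ENNReal.toReal_mono (by simp) (hA_le k)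
    rwa [ENNReal.toReal_ofReal (by norm_num)] at this
  have hp_nonneg : ∀ k, 0 ≤ p k := fun k => ENNReal.toReal_nonneg
  -- indicator variables
  set g : ℝ → ℝ := fun x => if c < |x - μ| then 1 else 0 with hg
  have hg_meas : Measurable g := by
    have hs : MeasurableSet {x : ℝ | c < |x - μ|} :=
      measurableSet_lt measurable_const ((measurable_id.sub measurable_const).abs)
    exact Measurable.ite hs measurable_const measurable_const
  set Y : Fin K → Ω → ℝ := fun k => g ∘ M k with hY
  have hY_eq : ∀ k ω, Y k ω = if c < |M k ω - μ| then 1 else 0 := fun k ω => rfl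
  have hY_meas : ∀ k, Measurable (Y k) := fun k => hg_meas.comp (hM_meas k)
  have hY_indep : iIndepFun Y ℙ := by
    refine my_block_iIndepFun X hmeas hindep Y ?_
    intro k mk hXk
    have hMk : @Measurable Ω ℝ mk _ (M k) := by
      have h1 : M k = fun ω => (N:ℝ)⁻¹ * ∑ i, X (k, i) ω := funext fun ω => hM k ω
      rw [h1]
      exact Measurable.const_mul (Finset.measurable_sum Finset.univ fun i _ => hXk i) _
    exact hg_meas.comp hMk
  have hY_nonneg : ∀ k ω, 0 ≤ Y k ω := by
    intro k ω
    rw [hY_eq]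
    split <;> norm_num
  have hY_le1 : ∀ k ω, Y k ω ≤ 1 := by
    intro k ω
    rw [hY_eq]
    split <;> norm_num
  have hY_int : ∀ k, Integrable (Y k) ℙ := by
    intro k
    refine Integrable.mono' (integrable_const (1:ℝ)) (hY_meas k).aestronglyMeasurable
      (Filter.Eventually.of_forall fun ω => ?_)
    rw [Real.norm_eq_abs, abs_of_nonneg (hY_nonneg k ω)]
    exact hY_le1 k ω
  have hY_integral : ∀ k, ∫ ω, Y k ω = p k := by
    intro k
    have hind : Y k = (A k).indicator (fun _ => (1:ℝ)) := by
      funext ω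
      by_cases h : c < |M k ω - μ|
      · have hm : ω ∈ A k := h
        rw [Set.indicator_of_mem hm, hY_eq, if_pos h]
      · have hm : ω ∉ A k := h
        rw [Set.indicator_of_notMem hm, hY_eq, if_neg h]
    rw [hind, integral_indicator_const (1:ℝ) (hA_meas k), smul_eq_mul, mul_one, hp_def, measureReal_def]
  -- Chernoff with t = log 3
  set t : ℝ := Real.log 3 with ht_def
  have ht : 0 ≤ t := Real.log_nonneg (by norm_num)
  have hexpt : Real.exp t = 3 := Real.exp_log (by norm_num)
  have hmgf : ∀ k, mgf (Y k) ℙ t ≤ 3/2 := by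
    intro k
    have heq : (fun ω => Real.exp (t * Y k ω)) = fun ω => 1 + (Real.exp t - 1) * Y k ω := by
      funext ω
      by_cases h : c < |M k ω - μ|
      · rw [hY_eq, if_pos h, mul_one, mul_one]
        ring
      · rw [hY_eq, if_neg h, mul_zero, mul_zero, Real.exp_zero, add_zero]
    rw [mgf, heq, integral_add (integrable_const 1) ((hY_int k).const_mul _),
      integral_const, integral_const_mul, hY_integral k]
    simp only [measureReal_def, measure_univ, ENNReal.toReal_one, smul_eq_mul, mul_one, one_mul]
    rw [hexpt]
    nlinarith [hp_le k, hp_nonneg k]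
  have hS_meas : Measurable (fun ω => ∑ k, Y k ω) :=
    Finset.measurable_sum Finset.univ fun k _ => hY_meas k
  have hS_le : ∀ ω, ∑ k, Y k ω ≤ (K:ℝ) := by
    intro ω
    calc ∑ k, Y k ω ≤ ∑ _k : Fin K, (1:ℝ) := Finset.sum_le_sum fun k _ => hY_le1 k ω
    _ = (K:ℝ) := by simp
  have hS_nonneg : ∀ ω, 0 ≤ ∑ k, Y k ω := fun ω =>
    Finset.sum_nonneg fun k _ => hY_nonneg k ω
  have hSint : Integrable (fun ω => Real.exp (t * (∑ k, Y k) ω)) ℙ := by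
    refine Integrable.mono' (integrable_const (Real.exp (t * K))) ?_
      (Filter.Eventually.of_forall fun ω => ?_)
    · simp only [Finset.sum_apply]
      exact ((hS_meas.const_mul t).exp).aestronglyMeasurable
    · rw [Real.norm_eq_abs, Real.abs_exp]
      refine Real.exp_le_exp.mpr ?_
      simp only [Finset.sum_apply]
      exact mul_le_mul_of_nonneg_left (hS_le ω) ht
  have hmgf_sum : mgf (∑ k, Y k) ℙ t ≤ (3/2:ℝ)^K := by
    rw [hY_indep.mgf_sum hY_meas]
    calc ∏ k, mgf (Y k) ℙ t ≤ ∏ _k : Fin K, (3/2:ℝ) :=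
      Finset.prod_le_prod (fun k _ => mgf_nonneg) (fun k _ => hmgf k)
    _ = (3/2:ℝ)^K := by simp [div_pow]
  have hch := measure_ge_le_exp_mul_mgf (X := ∑ k, Y k) (μ := ℙ) ((K:ℝ)/2) ht hSint
  have hnum : Real.exp (-t * ((K:ℝ)/2)) * (3/2:ℝ)^K ≤ Real.exp (-(K:ℝ)/8) := by
    have h32 : (3/2:ℝ)^K = Real.exp ((K:ℝ) * Real.log (3/2)) := by
      rw [Real.exp_nat_mul, Real.exp_log (by norm_num : (0:ℝ) < 3/2)]
    rw [h32, ← Real.exp_add]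
    refine Real.exp_le_exp.mpr ?_
    have hlog := my_log_ineq
    have hexp : -t * ((K:ℝ)/2) + (K:ℝ) * Real.log (3/2)
        = (K:ℝ) * (Real.log (3/2) - Real.log 3 / 2) := by
      rw [ht_def]; ring
    rw [hexp]
    nlinarith [mul_le_mul_of_nonneg_left hlog hK0]
  -- Part A
  have hEeq : {ω | (K:ℝ)/2 ≤ ((Finset.univ.filter fun k => c < |M k ω - μ|).card : ℝ)}
      = {ω | (K:ℝ)/2 ≤ (∑ k, Y k) ω} := by
    ext ω
    simp only [Set.mem_setOf_eq, Finset.sum_apply]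
    rw [show (∑ k, Y k ω) = ((Finset.univ.filter fun k => c < |M k ω - μ|).card : ℝ) by
      simp_rw [hY_eq]
      exact Finset.sum_boole _ _]
  have hpartA : ℙ {ω | (K:ℝ)/2 ≤
      ((Finset.univ.filter fun k => c < |M k ω - μ|).card : ℝ)} ≤
      ENNReal.ofReal (Real.exp (-(K:ℝ)/8)) := by
    rw [hEeq, ← ENNReal.ofReal_toReal (measure_ne_top ℙ _)]
    refine ENNReal.ofReal_le_ofReal ?_
    refine le_trans hch ?_
    exact le_trans (mul_le_mul_of_nonneg_left hmgf_sum (Real.exp_nonneg _)) hnum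
  refine ⟨hpartA, ?_⟩
  -- Part B: the median
  intro med hmed
  refine le_trans (measure_mono ?_) hpartA
  intro ω hω
  simp only [Set.mem_setOf_eq] at hω ⊢
  rcases lt_abs.mp hω with h | h
  · obtain ⟨-, h2⟩ := hmed ω
    refine le_trans h2 ?_
    have hsub : (Finset.univ.filter fun k => med ω ≤ M k ω)
        ⊆ Finset.univ.filter fun k => c < |M k ω - μ| := by
      intro k hk
      simp only [Finset.mem_filter, Finset.mem_univ, true_and] at hk ⊢
      have h3 : c < M k ω - μ := lt_of_lt_of_le h (by linarith)
      exact lt_of_lt_of_le h3 (le_abs_self _)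
    exact_mod_cast Nat.cast_le.mpr (Finset.card_le_card hsub)
  · obtain ⟨h1, -⟩ := hmed ω
    refine le_trans h1 ?_
    have hsub : (Finset.univ.filter fun k => M k ω ≤ med ω)
        ⊆ Finset.univ.filter fun k => c < |M k ω - μ| := by
      intro k hk
      simp only [Finset.mem_filter, Finset.mem_univ, true_and] at hk ⊢
      have h3 : c < -(M k ω - μ) := lt_of_lt_of_le h (by linarith)
      exact lt_of_lt_of_le h3 (neg_le_abs _)
    exact_mod_cast Nat.cast_le.mpr (Finset.card_le_card hsub)
end
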